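/- (Assouad's embedding theorem) For every D₁ ≥ 1 and every ε ∈ (0,1) there exist a natural number N = N(D₁,ε) and a constant L = L(D₁,ε) ≥ 1 such that for every metric space (X,d) that is doubling with constant D₁, there exists a map f : X → ℝ^N (Euclidean space with the Euclidean norm) satisfying (1/L) · d(x,y)^ε ≤ ‖f(x) − f(y)‖ ≤ L · d(x,y)^ε for all x, y ∈ X; that is, the ε-snowflaked version (X, d^ε) of X admits a bilipschitz embedding into ℝ^N, quantitatively. -/

import Mathlib

open Metric Finset

/-- `(X,d)` is a doubling metric space with constant `D₁`. -/
def MetricDoubling (X : Type*) [MetricSpace X] (D₁ : ℕ) : Prop :=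
  ∀ (x : X) (r : ℝ), 0 < r →
    ∃ s : Finset X, s.card ≤ D₁ ∧
      closedBall x r ⊆ ⋃ y ∈ s, closedBall y (r / 2)


/-- Geometric sum over a finset of naturals all `≥ m`. -/
lemma geom_nat_sum {ρ : ℝ} (h0 : 0 ≤ ρ) (h1 : ρ < 1) (m : ℕ) (t : Finset ℕ)
    (ht : ∀ k ∈ t, m ≤ k) : ∑ k ∈ t, ρ ^ k ≤ ρ ^ m / (1 - ρ) := by
  classical
  set B := (t.sup id) + 1 with hB
  have hsub : t ⊆ Finset.Ico m B := by
    intro k hk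
    simp only [Finset.mem_Ico]
    exact ⟨ht k hk, Nat.lt_succ_of_le (Finset.le_sup (f := id) hk)⟩
  have h2 : ∑ k ∈ t, ρ ^ k ≤ ∑ k ∈ Finset.Ico m B, ρ ^ k :=
    Finset.sum_le_sum_of_subset_of_nonneg hsub (fun i _ _ => pow_nonneg h0 i)
  refine h2.trans ?_
  rcases le_or_gt B m with hBm | hmB
  · rw [Finset.Ico_eq_empty (by omega)]
    simp only [Finset.sum_empty]
    exact div_nonneg (pow_nonneg h0 m) (by linarith)
  · have : ∑ k ∈ Finset.Ico m B, ρ ^ k = ρ ^ m * ∑ i ∈ Finset.range (B - m), ρ ^ i := by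
      rw [Finset.mul_sum]
      rw [Finset.sum_Ico_eq_sum_range]
      apply Finset.sum_congr rfl
      intro i _
      rw [← pow_add]
    rw [this]
    have hgeom : ∑ i ∈ Finset.range (B - m), ρ ^ i ≤ 1 / (1 - ρ) := by
      have h3 : ∑ i ∈ Finset.range (B - m), ρ ^ i = (1 - ρ ^ (B - m)) / (1 - ρ) := by
        rw [geom_sum_eq (by linarith)]
        rw [div_eq_div_iff (by linarith) (by linarith)]
        ring
      rw [h3]
      apply div_le_div_of_nonneg_right ?_ (by linarith) |>.trans_eq rfl
      · nlinarith [pow_nonneg h0 (B - m)]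
    calc ρ ^ m * ∑ i ∈ Finset.range (B - m), ρ ^ i ≤ ρ ^ m * (1 / (1-ρ)) := by
          apply mul_le_mul_of_nonneg_left hgeom (pow_nonneg h0 m)
      _ = ρ ^ m / (1 - ρ) := by ring

/-- Geometric sum over a finset of integers, in terms of distance to a center `n₀`. -/
lemma geom_int_sum {ρ : ℝ} (h0 : 0 ≤ ρ) (h1 : ρ < 1) (m : ℕ) (n₀ : ℤ) (s : Finset ℤ)
    (hs : ∀ n ∈ s, m ≤ (n - n₀).natAbs) :
    ∑ n ∈ s, ρ ^ (n - n₀).natAbs ≤ 2 * ρ ^ m / (1 - ρ) := by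
  classical
  have hsplit : s = s.filter (fun n => n₀ ≤ n) ∪ s.filter (fun n => ¬ n₀ ≤ n) :=
    (Finset.filter_union_filter_not_eq _ s).symm
  have hdisj : Disjoint (s.filter (fun n => n₀ ≤ n)) (s.filter (fun n => ¬ n₀ ≤ n)) :=
    Finset.disjoint_filter_filter_not s s _
  have key : ∀ t : Finset ℤ, t ⊆ s → (∀ a ∈ t, ∀ b ∈ t, (a - n₀).natAbs = (b - n₀).natAbs → a = b) →
      ∑ n ∈ t, ρ ^ (n - n₀).natAbs ≤ ρ ^ m / (1 - ρ) := by
    intro t hts hinj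
    have : ∑ n ∈ t, ρ ^ (n - n₀).natAbs = ∑ k ∈ t.image (fun n => (n - n₀).natAbs), ρ ^ k := by
      rw [Finset.sum_image hinj]
    rw [this]
    apply geom_nat_sum h0 h1
    intro k hk
    simp only [Finset.mem_image] at hk
    obtain ⟨n, hn, rfl⟩ := hk
    exact hs n (hts hn)
  rw [hsplit, Finset.sum_union hdisj]
  have e1 := key (s.filter (fun n => n₀ ≤ n)) (Finset.filter_subset _ _) ?_
  have e2 := key (s.filter (fun n => ¬ n₀ ≤ n)) (Finset.filter_subset _ _) ?_
  · have : 2 * ρ ^ m / (1 - ρ) = ρ ^ m / (1 - ρ) + ρ ^ m / (1 - ρ) := by ring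
    linarith
  · intro a ha b hb hab
    simp only [Finset.mem_filter] at ha hb
    omega
  · intro a ha b hb hab
    simp only [Finset.mem_filter] at ha hb
    omega

/-- Summability of the geometric family over ℤ. -/
lemma geom_int_summable {ρ : ℝ} (h0 : 0 ≤ ρ) (h1 : ρ < 1) (n₀ : ℤ) :
    Summable (fun n : ℤ => ρ ^ (n - n₀).natAbs) := by
  have base : Summable (fun n : ℤ => ρ ^ n.natAbs) := by
    apply Summable.of_nat_of_neg
    · simpa using summable_geometric_of_lt_one h0 h1
    · simpa using summable_geometric_of_lt_one h0 h1
  have := (Equiv.subRight n₀).summable_iff (f := fun n : ℤ => ρ ^ n.natAbs)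
  exact this.mpr base
variable {X : Type} [MetricSpace X] {D : ℕ}

/-- Iterated doubling: cover a ball of radius `r` by `D^k` balls of radius `r/2^k`. -/
lemma doubling_iter (hD : MetricDoubling X D) (x : X) (r : ℝ) (hr : 0 < r) (k : ℕ) :
    ∃ s : Finset X, s.card ≤ D ^ k ∧
      closedBall x r ⊆ ⋃ y ∈ s, closedBall y (r / 2 ^ k) := by
  classical
  induction k with
  | zero => exact ⟨{x}, by simp⟩
  | succ k ih =>
    obtain ⟨s, hcard, hcov⟩ := ih
    have hstep : ∀ y : X, ∃ t : Finset X, t.card ≤ D ∧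
        closedBall y (r / 2 ^ k) ⊆ ⋃ z ∈ t, closedBall z (r / 2 ^ (k+1)) := by
      intro y
      obtain ⟨t, ht1, ht2⟩ := hD y (r / 2 ^ k) (by positivity)
      refine ⟨t, ht1, ?_⟩
      have : r / 2 ^ k / 2 = r / 2 ^ (k+1) := by ring
      rwa [this] at ht2
    choose t ht1 ht2 using hstep
    refine ⟨s.biUnion t, ?_, ?_⟩
    · calc (s.biUnion t).card ≤ ∑ y ∈ s, (t y).card := Finset.card_biUnion_le
        _ ≤ ∑ _y ∈ s, D := Finset.sum_le_sum (fun y _ => ht1 y)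
        _ = s.card * D := by rw [Finset.sum_const, smul_eq_mul]
        _ ≤ D ^ k * D := Nat.mul_le_mul_right D hcard
        _ = D ^ (k+1) := by ring
    · intro z hz
      obtain ⟨_, ⟨y, rfl⟩, hy⟩ := hcov hz
      simp only [Set.mem_iUnion, exists_prop] at hy
      obtain ⟨hy, hz'⟩ := hy
      obtain ⟨_, ⟨w, rfl⟩, hw⟩ := ht2 y hz'
      simp only [Set.mem_iUnion, exists_prop] at hw
      obtain ⟨hw, hz''⟩ := hw
      simp only [Set.mem_iUnion, exists_prop, Finset.mem_biUnion]
      exact ⟨w, ⟨y, hy, hw⟩, hz''⟩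

/-- A separated set inside a ball is finite with controlled cardinality. -/
lemma separated_card (hD : MetricDoubling X D) {x : X} {r : ℝ} (hr : 0 < r) (k : ℕ)
    {S : Set X} (hS : S ⊆ closedBall x r)
    (hsep : ∀ a ∈ S, ∀ b ∈ S, a ≠ b → 2 * (r / 2 ^ k) < dist a b) :
    S.Finite ∧ S.ncard ≤ D ^ k := by
  classical
  obtain ⟨s, hcard, hcov⟩ := doubling_iter hD x r hr k
  have hex : ∀ a ∈ S, ∃ y ∈ s, dist a y ≤ r / 2 ^ k := by
    intro a ha
    have := hcov (hS ha)
    simp only [Set.mem_iUnion, exists_prop, mem_closedBall] at this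
    exact this
  set φ : X → X := fun a => if h : ∃ y ∈ s, dist a y ≤ r / 2 ^ k then h.choose else x with hφ
  have hφmem : ∀ a ∈ S, φ a ∈ s ∧ dist a (φ a) ≤ r / 2 ^ k := by
    intro a ha
    have h := hex a ha
    simp only [hφ, dif_pos h]
    exact ⟨h.choose_spec.1, h.choose_spec.2⟩
  have hinj : Set.InjOn φ S := by
    intro a ha b hb hab
    by_contra hne
    have h1 := (hφmem a ha).2
    have h2 := (hφmem b hb).2
    have : dist a b ≤ 2 * (r / 2 ^ k) := by
      calc dist a b ≤ dist a (φ a) + dist (φ b) b := by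
            rw [hab]; exact dist_triangle a (φ b) b
        _ ≤ r / 2 ^ k + r / 2 ^ k := add_le_add h1 (by rw [dist_comm]; exact h2)
        _ = 2 * (r / 2 ^ k) := by ring
    exact absurd this (not_le.mpr (hsep a ha b hb hne))
  have himg : φ '' S ⊆ ↑s := fun z ⟨a, ha, haz⟩ => haz ▸ (hφmem a ha).1
  have hfin : S.Finite := Set.Finite.of_finite_image ((s.finite_toSet).subset himg) hinj
  refine ⟨hfin, ?_⟩
  calc S.ncard = (φ '' S).ncard := (Set.ncard_image_of_injOn hinj).symm
    _ ≤ (↑s : Set X).ncard := Set.ncard_le_ncard himg s.finite_toSet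
    _ = s.card := by rw [Set.ncard_coe_finset]
    _ ≤ D ^ k := hcard

/-- Existence of an `r`-net: a maximal `r`-separated set, which then `r`-covers. -/
lemma exists_net (r : ℝ) (hr : 0 < r) :
    ∃ A : Set X, (∀ a ∈ A, ∀ b ∈ A, a ≠ b → r ≤ dist a b) ∧
      ∀ x : X, ∃ a ∈ A, dist x a < r := by
  classical
  set 𝒮 : Set (Set X) := {A | ∀ a ∈ A, ∀ b ∈ A, a ≠ b → r ≤ dist a b} with h𝒮
  have hchainub : ∀ c ⊆ 𝒮, IsChain (· ⊆ ·) c → ∃ ub ∈ 𝒮, ∀ s ∈ c, s ⊆ ub := by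
    intro c hc hchain
    refine ⟨⋃₀ c, ?_, fun s hs => Set.subset_sUnion_of_mem hs⟩
    intro a ha b hb hab
    obtain ⟨s, hs, has⟩ := ha
    obtain ⟨t, ht, hbt⟩ := hb
    rcases hchain.total hs ht with hst | hts
    · exact hc ht a (hst has) b hbt hab
    · exact hc hs a has b (hts hbt) hab
  obtain ⟨M, hM⟩ := zorn_subset 𝒮 hchainub
  · refine ⟨M, hM.prop, ?_⟩
    intro x
    by_contra hx
    push_neg at hx
    have hxM : x ∉ M := by
      intro hmem
      exact absurd (hx x hmem) (by simp [hr])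
    have hins : insert x M ∈ 𝒮 := by
      intro a ha b hb hab
      rcases Set.mem_insert_iff.mp ha with rfl | ha'
      · rcases Set.mem_insert_iff.mp hb with rfl | hb'
        · exact absurd rfl hab
        · exact hx b hb'
      · rcases Set.mem_insert_iff.mp hb with rfl | hb'
        · rw [dist_comm]; exact hx a ha'
        · exact hM.prop a ha' b hb' hab
    have := hM.2 hins (Set.subset_insert x M)
    exact hxM (this (Set.mem_insert x M))

open Classical in
/-- Greedy coloring auxiliary: color by recursion on an index. -/
noncomputable def greedyAux {α : Type*} (nb : α → α → Prop) (ι : α → ℕ) : ℕ → α → ℕ :=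
  (Nat.lt_wfRel.wf).fix (C := fun _ => α → ℕ)
    (fun n ih a => sInf {k : ℕ | ∀ b, nb a b → ∀ hb : ι b < n, ih (ι b) hb b ≠ k})

noncomputable def greedyCol {α : Type*} (nb : α → α → Prop) (ι : α → ℕ) (a : α) : ℕ :=
  greedyAux nb ι (ι a) a

lemma greedyAux_eq {α : Type*} (nb : α → α → Prop) (ι : α → ℕ) (n : ℕ) (a : α) :
    greedyAux nb ι n a
      = sInf {k : ℕ | ∀ b, nb a b → ι b < n → greedyAux nb ι (ι b) b ≠ k} := by
  have h := WellFounded.fix_eq (C := fun _ => α → ℕ) (Nat.lt_wfRel.wf)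
    (fun n ih a => sInf {k : ℕ | ∀ b, nb a b → ∀ hb : ι b < n, ih (ι b) hb b ≠ k}) n
  calc greedyAux nb ι n a = _ := congrFun h a

section greedy
variable {α : Type*} (nb : α → α → Prop) (ι : α → ℕ) {K : ℕ}
  (hfin : ∀ a, {b | nb a b}.Finite) (hK : ∀ a, {b | nb a b}.ncard < K)

include hfin hK in
lemma greedy_good_nonempty (a : α) :
    ∃ k < K, k ∈ {k : ℕ | ∀ b, nb a b → ι b < ι a → greedyAux nb ι (ι b) b ≠ k} := by
  classical
  set Fb : Set ℕ := (fun b => greedyAux nb ι (ι b) b) '' {b | nb a b} with hFb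
  have hFbfin : Fb.Finite := (hfin a).image _
  have hFbcard : Fb.ncard < K := lt_of_le_of_lt (Set.ncard_image_le (hfin a)) (hK a)
  have : ¬ (Finset.range K ⊆ hFbfin.toFinset) := by
    intro hsub
    have := Finset.card_le_card hsub
    rw [Finset.card_range] at this
    rw [Set.ncard_eq_toFinset_card _ hFbfin] at hFbcard
    omega
  obtain ⟨k, hk1, hk2⟩ := Finset.not_subset.mp this
  refine ⟨k, Finset.mem_range.mp hk1, ?_⟩
  intro b hb _ heq
  exact hk2 (hFbfin.mem_toFinset.mpr ⟨b, hb, heq⟩)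

include hfin hK in
lemma greedyCol_lt (a : α) : greedyCol nb ι a < K := by
  obtain ⟨k, hkK, hk⟩ := greedy_good_nonempty nb ι hfin hK a
  have : greedyCol nb ι a ≤ k := by
    rw [greedyCol, greedyAux_eq]
    exact Nat.sInf_le hk
  omega

include hfin hK in
lemma greedyCol_ne (a b : α) (hab : nb a b) (hlt : ι b < ι a) :
    greedyCol nb ι b ≠ greedyCol nb ι a := by
  obtain ⟨k, hkK, hk⟩ := greedy_good_nonempty nb ι hfin hK a
  have hmem : greedyCol nb ι a ∈
      {k : ℕ | ∀ b, nb a b → ι b < ι a → greedyAux nb ι (ι b) b ≠ k} := by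
    rw [greedyCol, greedyAux_eq]
    exact Nat.sInf_mem ⟨k, hk⟩
  exact hmem b hab hlt

end greedy

/-- The core per-term estimate: each term of the snowflake series is dominated by
a geometric sequence centered at the scale `n₀` matching `d`. -/
lemma core_bound {ε : ℝ} (hε0 : 0 < ε) (hε1 : ε < 1) {d : ℝ} (hd : 0 < d) (n n₀ : ℤ)
    (h1 : (2:ℝ) ^ (-(n₀:ℝ)) ≤ d) (h2 : d ≤ 8 * (2:ℝ) ^ (-(n₀:ℝ))) :
    (2:ℝ) ^ (-(n:ℝ) * ε) * min 1 ((2:ℝ) ^ ((n:ℝ)) * d)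
      ≤ 8 * d ^ ε * ((2:ℝ) ^ (-(min ε (1-ε)))) ^ ((n - n₀).natAbs) := by
  set δ := min ε (1-ε) with hδ
  have hδ0 : 0 < δ := lt_min hε0 (by linarith)
  have hδε : δ ≤ ε := min_le_left _ _
  have hδ1ε : δ ≤ 1 - ε := min_le_right _ _
  have hp : ∀ t : ℝ, (0:ℝ) < (2:ℝ) ^ t := fun t => Real.rpow_pos_of_pos two_pos t
  have hmul : ∀ s t : ℝ, (2:ℝ) ^ s * (2:ℝ) ^ t = (2:ℝ) ^ (s + t) :=
    fun s t => (Real.rpow_add two_pos s t).symm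
  have hmono : ∀ {s t : ℝ}, s ≤ t → (2:ℝ) ^ s ≤ (2:ℝ) ^ t :=
    fun h => Real.rpow_le_rpow_of_exponent_le one_le_two h
  set k : ℕ := (n - n₀).natAbs with hk
  have hρk : ((2:ℝ) ^ (-δ)) ^ k = (2:ℝ) ^ (-δ * (k:ℝ)) := by
    rw [Real.rpow_mul (by norm_num : (0:ℝ) ≤ 2), Real.rpow_natCast]
  have hA : (2:ℝ) ^ (-(n₀:ℝ) * ε) ≤ d ^ ε := by
    rw [Real.rpow_mul (by norm_num : (0:ℝ) ≤ 2)]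
    exact Real.rpow_le_rpow (hp _).le h1 hε0.le
  rw [hρk]
  rcases le_or_gt n₀ n with hcase | hcase
  · -- n₀ ≤ n
    have hkr : (k:ℝ) = (n:ℝ) - (n₀:ℝ) := by
      have hz : ((k:ℤ)) = n - n₀ := Int.natAbs_of_nonneg (by omega)
      have h' := congrArg (fun z : ℤ => (z:ℝ)) hz
      push_cast at h'
      exact h'
    have hB : (2:ℝ) ^ (-ε * (k:ℝ)) ≤ (2:ℝ) ^ (-δ * (k:ℝ)) := by
      apply hmono
      have hk0 : (0:ℝ) ≤ (k:ℝ) := Nat.cast_nonneg k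
      nlinarith
    have hLHS : (2:ℝ) ^ (-(n:ℝ) * ε) * min 1 ((2:ℝ) ^ ((n:ℝ)) * d) ≤ (2:ℝ) ^ (-(n:ℝ) * ε) := by
      have : min 1 ((2:ℝ) ^ ((n:ℝ)) * d) ≤ 1 := min_le_left _ _
      nlinarith [hp (-(n:ℝ) * ε), (min_le_left 1 ((2:ℝ) ^ ((n:ℝ)) * d))]
    refine hLHS.trans ?_
    have key : (2:ℝ) ^ (-(n:ℝ) * ε) = (2:ℝ) ^ (-(n₀:ℝ) * ε) * (2:ℝ) ^ (-ε * (k:ℝ)) := by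
      rw [hmul]
      congr 1
      rw [hkr]; ring
    rw [key]
    calc (2:ℝ) ^ (-(n₀:ℝ) * ε) * (2:ℝ) ^ (-ε * (k:ℝ))
        ≤ d ^ ε * (2:ℝ) ^ (-δ * (k:ℝ)) :=
          mul_le_mul hA hB (hp _).le (Real.rpow_nonneg hd.le ε)
      _ ≤ 8 * d ^ ε * (2:ℝ) ^ (-δ * (k:ℝ)) := by
          nlinarith [Real.rpow_nonneg hd.le ε, hp (-δ * (k:ℝ)),
            mul_nonneg (Real.rpow_nonneg hd.le ε) (hp (-δ * (k:ℝ))).le]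
  · -- n < n₀
    have hkr : (k:ℝ) = (n₀:ℝ) - (n:ℝ) := by
      have hz : ((k:ℤ)) = n₀ - n := by omega
      have h' := congrArg (fun z : ℤ => (z:ℝ)) hz
      push_cast at h'
      exact h'
    have hB : (2:ℝ) ^ (-(1-ε) * (k:ℝ)) ≤ (2:ℝ) ^ (-δ * (k:ℝ)) := by
      apply hmono
      have hk0 : (0:ℝ) ≤ (k:ℝ) := Nat.cast_nonneg k
      nlinarith
    have hLHS : (2:ℝ) ^ (-(n:ℝ) * ε) * min 1 ((2:ℝ) ^ ((n:ℝ)) * d)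
        ≤ (2:ℝ) ^ (-(n:ℝ) * ε) * ((2:ℝ) ^ ((n:ℝ)) * (8 * (2:ℝ) ^ (-(n₀:ℝ)))) := by
      apply mul_le_mul_of_nonneg_left ?_ (hp _).le
      refine (min_le_right _ _).trans ?_
      exact mul_le_mul_of_nonneg_left h2 (hp _).le
    refine hLHS.trans ?_
    have key : (2:ℝ) ^ (-(n:ℝ) * ε) * ((2:ℝ) ^ ((n:ℝ)) * (8 * (2:ℝ) ^ (-(n₀:ℝ))))
        = 8 * ((2:ℝ) ^ (-(n₀:ℝ) * ε) * (2:ℝ) ^ (-(1-ε) * (k:ℝ))) := by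
      rw [hmul, hkr]
      have : (2:ℝ) ^ (-(n:ℝ) * ε) * ((2:ℝ) ^ ((n:ℝ)) * (8 * (2:ℝ) ^ (-(n₀:ℝ))))
          = 8 * ((2:ℝ) ^ (-(n:ℝ) * ε) * (2:ℝ) ^ ((n:ℝ)) * (2:ℝ) ^ (-(n₀:ℝ))) := by ring
      rw [this, hmul, hmul]
      congr 1
      congr 1
      ring
    rw [key]
    have : (2:ℝ) ^ (-(n₀:ℝ) * ε) * (2:ℝ) ^ (-(1-ε) * (k:ℝ)) ≤ d ^ ε * (2:ℝ) ^ (-δ * (k:ℝ)) :=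
      mul_le_mul hA hB (hp _).le (Real.rpow_nonneg hd.le ε)
    nlinarith [this]
/-- Choice of the scale matching a positive distance `d`. -/
lemma exists_scale {d : ℝ} (hd : 0 < d) :
    ∃ n₀ : ℤ, (2:ℝ) ^ (-(n₀:ℝ)) ≤ d ∧ d < 2 * (2:ℝ) ^ (-(n₀:ℝ)) := by
  obtain ⟨p, hp⟩ := exists_mem_Ico_zpow hd one_lt_two
  refine ⟨-p, ?_, ?_⟩
  · have : (2:ℝ) ^ (-((-p : ℤ):ℝ)) = (2:ℝ) ^ p := by
      rw [show (-((-p : ℤ):ℝ)) = ((p:ℤ):ℝ) by push_cast; ring, Real.rpow_intCast]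
    rw [this]; exact hp.1
  · have : (2:ℝ) ^ (-((-p : ℤ):ℝ)) = (2:ℝ) ^ p := by
      rw [show (-((-p : ℤ):ℝ)) = ((p:ℤ):ℝ) by push_cast; ring, Real.rpow_intCast]
    rw [this]
    have h2 : (2:ℝ) ^ (p + 1) = 2 * (2:ℝ) ^ p := by
      rw [zpow_add₀ (by norm_num : (2:ℝ) ≠ 0)]; ring
    have := hp.2
    rw [Set.mem_Ico] at hp
    linarith [hp.2, h2 ▸ hp.2]

section bounds
variable {ε : ℝ} (hε0 : 0 < ε) (hε1 : ε < 1)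

/-- ρ basics -/
lemma rho_mem (hε0 : 0 < ε) (hε1 : ε < 1) :
    0 < (2:ℝ) ^ (-(min ε (1-ε))) ∧ (2:ℝ) ^ (-(min ε (1-ε))) < 1 :=
  ⟨Real.rpow_pos_of_pos two_pos _,
    Real.rpow_lt_one_of_one_lt_of_neg one_lt_two (by simp only [neg_neg, neg_lt, neg_zero]; exact lt_min hε0 (by linarith))⟩

/-- Finite-sum bound for the dominating series. -/
lemma bnd_sum_le (hε0 : 0 < ε) (hε1 : ε < 1) {d : ℝ} (hd : 0 < d) (n₀ : ℤ)
    (h1 : (2:ℝ) ^ (-(n₀:ℝ)) ≤ d) (h2 : d ≤ 8 * (2:ℝ) ^ (-(n₀:ℝ)))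
    (mgap : ℕ) (s : Finset ℤ) (hs : ∀ n ∈ s, mgap ≤ (n - n₀).natAbs) :
    ∑ n ∈ s, (2:ℝ) ^ (-(n:ℝ) * ε) * min 1 ((2:ℝ) ^ ((n:ℝ)) * d)
      ≤ 16 * d ^ ε * ((2:ℝ) ^ (-(min ε (1-ε)))) ^ mgap / (1 - (2:ℝ) ^ (-(min ε (1-ε)))) := by
  obtain ⟨hρ0, hρ1⟩ := rho_mem hε0 hε1
  set ρ := (2:ℝ) ^ (-(min ε (1-ε)))
  calc ∑ n ∈ s, (2:ℝ) ^ (-(n:ℝ) * ε) * min 1 ((2:ℝ) ^ ((n:ℝ)) * d)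
      ≤ ∑ n ∈ s, 8 * d ^ ε * ρ ^ (n - n₀).natAbs :=
        Finset.sum_le_sum (fun n _ => core_bound hε0 hε1 hd n n₀ h1 h2)
    _ = 8 * d ^ ε * ∑ n ∈ s, ρ ^ (n - n₀).natAbs := by rw [Finset.mul_sum]
    _ ≤ 8 * d ^ ε * (2 * ρ ^ mgap / (1 - ρ)) := by
        apply mul_le_mul_of_nonneg_left (geom_int_sum hρ0.le hρ1 mgap n₀ s hs)
        positivity
    _ = 16 * d ^ ε * ρ ^ mgap / (1 - ρ) := by ring

/-- Summability of the dominating series. -/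
lemma bnd_summable (hε0 : 0 < ε) (hε1 : ε < 1) {d : ℝ} (hd : 0 ≤ d) :
    Summable (fun n : ℤ => (2:ℝ) ^ (-(n:ℝ) * ε) * min 1 ((2:ℝ) ^ ((n:ℝ)) * d)) := by
  obtain ⟨hρ0, hρ1⟩ := rho_mem hε0 hε1
  rcases eq_or_lt_of_le hd with rfl | hd'
  · have : (fun n : ℤ => (2:ℝ) ^ (-(n:ℝ) * ε) * min 1 ((2:ℝ) ^ ((n:ℝ)) * 0)) = fun _ => 0 := by
      funext n; simp
    rw [this]; exact summable_zero
  · obtain ⟨n₀, h1, h2⟩ := exists_scale hd'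
    apply Summable.of_nonneg_of_le
      (g := fun n : ℤ => (2:ℝ) ^ (-(n:ℝ) * ε) * min 1 ((2:ℝ) ^ ((n:ℝ)) * d))
      (f := fun n : ℤ => 8 * d ^ ε * ((2:ℝ) ^ (-(min ε (1-ε)))) ^ (n - n₀).natAbs)
    · intro n
      have := Real.rpow_pos_of_pos two_pos (-(n:ℝ) * ε)
      have h3 : (0:ℝ) ≤ min 1 ((2:ℝ) ^ ((n:ℝ)) * d) :=
        le_min zero_le_one (by positivity)
      positivity
    · intro n
      exact core_bound hε0 hε1 hd' n n₀ h1 (by linarith)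
    · exact (geom_int_summable hρ0.le hρ1 n₀).mul_left _

/-- tsum bound over all of ℤ. -/
lemma bnd_tsum_le (hε0 : 0 < ε) (hε1 : ε < 1) {d : ℝ} (hd : 0 < d) :
    ∑' n : ℤ, (2:ℝ) ^ (-(n:ℝ) * ε) * min 1 ((2:ℝ) ^ ((n:ℝ)) * d)
      ≤ 16 * d ^ ε / (1 - (2:ℝ) ^ (-(min ε (1-ε)))) := by
  obtain ⟨n₀, h1, h2⟩ := exists_scale hd
  have := bnd_sum_le hε0 hε1 hd n₀ h1 (by linarith) 0
  apply Summable.tsum_le_of_sum_le (bnd_summable hε0 hε1 hd.le)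
  intro s
  have h := this s (fun n _ => Nat.zero_le _)
  simpa using h
section snow
variable {X : Type} [MetricSpace X]

/-- The bump function at one scale associated to a colour class. -/
noncomputable def snowG (S : Set X) (rn : ℝ) (x : X) : ℝ :=
  max 0 (min 1 (2 - rn⁻¹ * infDist x S))

lemma snowG_nonneg (S : Set X) (rn : ℝ) (x : X) : 0 ≤ snowG S rn x := le_max_left _ _

lemma snowG_le_one (S : Set X) (rn : ℝ) (x : X) : snowG S rn x ≤ 1 :=
  max_le (by norm_num) (min_le_left _ _)

lemma snowG_lip {S : Set X} {rn : ℝ} (hrn : 0 < rn) (x y : X) :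
    |snowG S rn x - snowG S rn y| ≤ min 1 (rn⁻¹ * dist x y) := by
  refine le_min ?_ ?_
  · have h1 := snowG_nonneg S rn x
    have h2 := snowG_nonneg S rn y
    have h3 := snowG_le_one S rn x
    have h4 := snowG_le_one S rn y
    rw [abs_sub_le_iff]
    constructor <;> linarith
  · have hstep1 : |snowG S rn x - snowG S rn y|
        ≤ |(2 - rn⁻¹ * infDist x S) - (2 - rn⁻¹ * infDist y S)| := by
      unfold snowG
      calc |max 0 (min 1 (2 - rn⁻¹ * infDist x S)) - max 0 (min 1 (2 - rn⁻¹ * infDist y S))|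
          = |max (min 1 (2 - rn⁻¹ * infDist x S)) 0 - max (min 1 (2 - rn⁻¹ * infDist y S)) 0| := by
            rw [max_comm 0, max_comm 0]
        _ ≤ |min 1 (2 - rn⁻¹ * infDist x S) - min 1 (2 - rn⁻¹ * infDist y S)| :=
            abs_max_sub_max_le_abs _ _ _
        _ ≤ max |(1:ℝ) - 1| |(2 - rn⁻¹ * infDist x S) - (2 - rn⁻¹ * infDist y S)| :=
            abs_min_sub_min_le_max _ _ _ _
        _ = _ := by rw [sub_self, abs_zero]; exact max_eq_right (abs_nonneg _)
    refine hstep1.trans ?_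
    have hid : |infDist x S - infDist y S| ≤ dist x y := by
      rw [abs_sub_le_iff]
      constructor
      · linarith [infDist_le_infDist_add_dist (s := S) (x := x) (y := y)]
      · linarith [infDist_le_infDist_add_dist (s := S) (x := y) (y := x), dist_comm x y]
    have heq : (2 - rn⁻¹ * infDist x S) - (2 - rn⁻¹ * infDist y S)
        = rn⁻¹ * (infDist y S - infDist x S) := by ring
    rw [heq, abs_mul, abs_of_nonneg (by positivity : (0:ℝ) ≤ rn⁻¹)]
    apply mul_le_mul_of_nonneg_left ?_ (by positivity)
    rw [abs_sub_comm]
    exact hid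

lemma snowG_one {S : Set X} {rn : ℝ} (hrn : 0 < rn) {x a : X} (haS : a ∈ S)
    (hdxa : dist x a < rn) : snowG S rn x = 1 := by
  have h1 : infDist x S ≤ dist x a := infDist_le_dist_of_mem haS
  have h2 : rn⁻¹ * infDist x S < 1 := by
    rw [← inv_mul_cancel₀ hrn.ne']
    exact mul_lt_mul_of_pos_left (lt_of_le_of_lt h1 hdxa) (by positivity)
  have h3 : (1:ℝ) ≤ 2 - rn⁻¹ * infDist x S := by linarith
  unfold snowG
  rw [min_eq_left h3, max_eq_right (by norm_num : (0:ℝ) ≤ 1)]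

lemma snowG_zero {S : Set X} {rn : ℝ} (hrn : 0 < rn) {y : X} (hSne : S.Nonempty)
    (hfar : ∀ a ∈ S, 2 * rn ≤ dist y a) : snowG S rn y = 0 := by
  have h1 : 2 * rn ≤ infDist y S := by
    by_contra h
    push_neg at h
    obtain ⟨a, haS, hda⟩ := (infDist_lt_iff hSne).mp h
    exact absurd hda (not_lt.mpr (hfar a haS))
  have h2 : (2:ℝ) ≤ rn⁻¹ * infDist y S := by
    rw [show (2:ℝ) = rn⁻¹ * (2 * rn) by field_simp]
    exact mul_le_mul_of_nonneg_left h1 (by positivity)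
  have h3 : min 1 (2 - rn⁻¹ * infDist y S) ≤ 0 := le_trans (min_le_right _ _) (by linarith)
  unfold snowG
  rw [max_eq_left h3]

/-- The coordinate series of the Assouad embedding, for one colour class and one residue. -/
noncomputable def coordFn (ε : ℝ) (m : ℕ) (G : ℤ → X → ℝ) (j : ℕ) (x y : X) (n : ℤ) : ℝ :=
  if n % (m:ℤ) = (j:ℤ) then (2:ℝ) ^ (-(n:ℝ) * ε) * (G n x - G n y) else 0

variable {ε : ℝ} {m : ℕ} {G : ℤ → X → ℝ}

lemma coordFn_abs_le
    (hG : ∀ (n : ℤ) (z z' : X), |G n z - G n z'| ≤ min 1 ((2:ℝ) ^ ((n:ℝ)) * dist z z'))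
    (j : ℕ) (x y : X) (n : ℤ) :
    |coordFn ε m G j x y n| ≤ (2:ℝ) ^ (-(n:ℝ) * ε) * min 1 ((2:ℝ) ^ ((n:ℝ)) * dist x y) := by
  unfold coordFn
  have hw : (0:ℝ) < (2:ℝ) ^ (-(n:ℝ) * ε) := Real.rpow_pos_of_pos two_pos _
  split_ifs with h
  · rw [abs_mul, abs_of_nonneg hw.le]
    exact mul_le_mul_of_nonneg_left (hG n x y) hw.le
  · rw [abs_zero]
    have : (0:ℝ) ≤ min 1 ((2:ℝ) ^ ((n:ℝ)) * dist x y) := le_min zero_le_one (by positivity)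
    positivity

lemma coordFn_abs_summable (hε0 : 0 < ε) (hε1 : ε < 1)
    (hG : ∀ (n : ℤ) (z z' : X), |G n z - G n z'| ≤ min 1 ((2:ℝ) ^ ((n:ℝ)) * dist z z'))
    (j : ℕ) (x y : X) : Summable (fun n => |coordFn ε m G j x y n|) :=
  Summable.of_nonneg_of_le (fun _ => abs_nonneg _) (coordFn_abs_le hG j x y)
    (bnd_summable hε0 hε1 dist_nonneg)

lemma coordFn_summable (hε0 : 0 < ε) (hε1 : ε < 1)
    (hG : ∀ (n : ℤ) (z z' : X), |G n z - G n z'| ≤ min 1 ((2:ℝ) ^ ((n:ℝ)) * dist z z'))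
    (j : ℕ) (x y : X) : Summable (coordFn ε m G j x y) :=
  (coordFn_abs_summable hε0 hε1 hG j x y).of_abs

lemma coordFn_tsum_sub (hε0 : 0 < ε) (hε1 : ε < 1)
    (hG : ∀ (n : ℤ) (z z' : X), |G n z - G n z'| ≤ min 1 ((2:ℝ) ^ ((n:ℝ)) * dist z z'))
    (j : ℕ) (x y z : X) :
    (∑' n : ℤ, coordFn ε m G j x z n) - (∑' n : ℤ, coordFn ε m G j y z n)
      = ∑' n : ℤ, coordFn ε m G j x y n := by
  rw [← Summable.tsum_sub (coordFn_summable hε0 hε1 hG j x z) (coordFn_summable hε0 hε1 hG j y z)]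
  congr 1
  funext n
  unfold coordFn
  split_ifs with h
  · ring
  · ring

lemma coordFn_tsum_abs_le (hε0 : 0 < ε) (hε1 : ε < 1)
    (hG : ∀ (n : ℤ) (z z' : X), |G n z - G n z'| ≤ min 1 ((2:ℝ) ^ ((n:ℝ)) * dist z z'))
    (j : ℕ) {x y : X} (hd : 0 < dist x y) :
    |∑' n : ℤ, coordFn ε m G j x y n|
      ≤ 16 * dist x y ^ ε / (1 - (2:ℝ) ^ (-(min ε (1-ε)))) := by
  calc |∑' n : ℤ, coordFn ε m G j x y n| ≤ ∑' n : ℤ, |coordFn ε m G j x y n| := by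
        have h := norm_tsum_le_tsum_norm (f := coordFn ε m G j x y)
          (by simpa [Real.norm_eq_abs] using coordFn_abs_summable hε0 hε1 hG j x y)
        simpa [Real.norm_eq_abs] using h
    _ ≤ ∑' n : ℤ, (2:ℝ) ^ (-(n:ℝ) * ε) * min 1 ((2:ℝ) ^ ((n:ℝ)) * dist x y) :=
        Summable.tsum_le_tsum (coordFn_abs_le hG j x y) (coordFn_abs_summable hε0 hε1 hG j x y)
          (bnd_summable hε0 hε1 dist_nonneg)
    _ ≤ 16 * dist x y ^ ε / (1 - (2:ℝ) ^ (-(min ε (1-ε)))) := bnd_tsum_le hε0 hε1 hd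

/-- Lower bound at the key coordinate. -/
lemma coordFn_tsum_lower (hε0 : 0 < ε) (hε1 : ε < 1) (hm0 : 0 < m)
    (hρm : ((2:ℝ) ^ (-(min ε (1-ε)))) ^ m < (1 - (2:ℝ) ^ (-(min ε (1-ε)))) / 256)
    (hG : ∀ (n : ℤ) (z z' : X), |G n z - G n z'| ≤ min 1 ((2:ℝ) ^ ((n:ℝ)) * dist z z'))
    (n : ℤ) {x y : X}
    (h4 : 4 * (2:ℝ) ^ (-(n:ℝ)) ≤ dist x y) (h8 : dist x y < 8 * (2:ℝ) ^ (-(n:ℝ)))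
    (hx1 : G n x = 1) (hy0 : G n y = 0) :
    dist x y ^ ε / 16 ≤ |∑' n' : ℤ, coordFn ε m G ((n % (m:ℤ)).toNat) x y n'| := by
  classical
  obtain ⟨hρ0, hρ1⟩ := rho_mem hε0 hε1
  set ρ : ℝ := (2:ℝ) ^ (-(min ε (1-ε))) with hρdef
  have hρgap : 0 < 1 - ρ := by linarith
  set d : ℝ := dist x y with hddef
  have hrn : (0:ℝ) < (2:ℝ) ^ (-(n:ℝ)) := Real.rpow_pos_of_pos two_pos _
  have hd : 0 < d := by rw [hddef]; nlinarith
  set j : ℕ := (n % (m:ℤ)).toNat with hjdef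
  have hjn : ((j:ℤ)) = n % (m:ℤ) :=
    Int.toNat_of_nonneg (Int.emod_nonneg n (by exact_mod_cast hm0.ne'))
  set w : ℝ := (2:ℝ) ^ (-(n:ℝ) * ε) with hwdef
  have hwpos : 0 < w := Real.rpow_pos_of_pos two_pos _
  have hkey : coordFn ε m G j x y n = w := by
    unfold coordFn
    rw [if_pos hjn.symm, hx1, hy0]
    ring
  -- error bound
  have hif_le : ∀ n' : ℤ, |if n' = n then 0 else coordFn ε m G j x y n'|
      ≤ |coordFn ε m G j x y n'| := by
    intro n'
    split_ifs with h
    · simp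
    · exact le_refl _
  have hsummable' : Summable (fun n' : ℤ => |if n' = n then 0 else coordFn ε m G j x y n'|) :=
    Summable.of_nonneg_of_le (fun _ => abs_nonneg _) hif_le
      (coordFn_abs_summable hε0 hε1 hG j x y)
  have herr : ∑' n' : ℤ, |if n' = n then 0 else coordFn ε m G j x y n'| ≤ (1/2) * w := by
    have hfinsum : ∀ s : Finset ℤ,
        ∑ n' ∈ s, |if n' = n then 0 else coordFn ε m G j x y n'| ≤ (1/2) * w := by
      intro s
      have hfilter : ∑ n' ∈ s, |if n' = n then 0 else coordFn ε m G j x y n'|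
          = ∑ n' ∈ s.filter (fun n' => n' ≠ n ∧ n' % (m:ℤ) = (j:ℤ)),
            |if n' = n then 0 else coordFn ε m G j x y n'| := by
        rw [Finset.sum_filter_of_ne]
        intro n' hn' hne
        by_contra hcond
        apply hne
        push_neg at hcond
        by_cases h : n' = n
        · rw [if_pos h, abs_zero]
        · rw [if_neg h]
          unfold coordFn
          rw [if_neg (hcond h), abs_zero]
      rw [hfilter]
      have hgap : ∀ n' ∈ s.filter (fun n' => n' ≠ n ∧ n' % (m:ℤ) = (j:ℤ)),
          m ≤ (n' - n).natAbs := by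
        intro n' hn'
        rw [Finset.mem_filter] at hn'
        obtain ⟨_, hne, hmod⟩ := hn'
        have hdvd : (m:ℤ) ∣ (n' - n) := by
          apply Int.dvd_of_emod_eq_zero
          rw [← Int.emod_eq_emod_iff_emod_sub_eq_zero, hmod, hjn]
        have hdvd' : m ∣ (n' - n).natAbs := by
          rw [← Int.natAbs_natCast m]
          exact Int.natAbs_dvd_natAbs.mpr hdvd
        exact Nat.le_of_dvd (by omega) hdvd'
      calc ∑ n' ∈ s.filter (fun n' => n' ≠ n ∧ n' % (m:ℤ) = (j:ℤ)),
            |if n' = n then 0 else coordFn ε m G j x y n'|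
          ≤ ∑ n' ∈ s.filter (fun n' => n' ≠ n ∧ n' % (m:ℤ) = (j:ℤ)),
            (2:ℝ) ^ (-(n':ℝ) * ε) * min 1 ((2:ℝ) ^ ((n':ℝ)) * d) := by
            apply Finset.sum_le_sum
            intro n' hn'
            rw [Finset.mem_filter] at hn'
            rw [if_neg hn'.2.1]
            exact coordFn_abs_le hG j x y n'
        _ ≤ 16 * d ^ ε * ρ ^ m / (1 - ρ) :=
            bnd_sum_le hε0 hε1 hd n (by linarith) (by linarith) m _ hgap
        _ ≤ (1/2) * w := by
            have hdε : d ^ ε ≤ 8 * w := by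
              have h1 : d ^ ε ≤ (8 * (2:ℝ) ^ (-(n:ℝ))) ^ ε :=
                Real.rpow_le_rpow hd.le h8.le hε0.le
              have h2 : (8 * (2:ℝ) ^ (-(n:ℝ))) ^ ε = 8 ^ ε * ((2:ℝ) ^ (-(n:ℝ))) ^ ε :=
                Real.mul_rpow (by norm_num) hrn.le
              have h3 : (8:ℝ) ^ ε ≤ 8 := by
                calc (8:ℝ) ^ ε ≤ 8 ^ (1:ℝ) :=
                      Real.rpow_le_rpow_of_exponent_le (by norm_num) hε1.le
                  _ = 8 := Real.rpow_one 8
              have h4 : ((2:ℝ) ^ (-(n:ℝ))) ^ ε = w := by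
                rw [hwdef, ← Real.rpow_mul (by norm_num : (0:ℝ) ≤ 2)]
              have h5 : (0:ℝ) ≤ ((2:ℝ) ^ (-(n:ℝ))) ^ ε := Real.rpow_nonneg hrn.le ε
              calc d ^ ε ≤ 8 ^ ε * ((2:ℝ) ^ (-(n:ℝ))) ^ ε := h2 ▸ h1
                _ ≤ 8 * ((2:ℝ) ^ (-(n:ℝ))) ^ ε := mul_le_mul_of_nonneg_right h3 h5
                _ = 8 * w := by rw [h4]
            have hρmnn : (0:ℝ) ≤ ρ ^ m := pow_nonneg hρ0.le m
            have h6 : 16 * d ^ ε * ρ ^ m / (1 - ρ) ≤ 16 * (8 * w) * ρ ^ m / (1 - ρ) := by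
              apply div_le_div_of_nonneg_right ?_ hρgap.le |>.trans_eq rfl
              nlinarith [Real.rpow_nonneg hd.le ε]
            refine h6.trans ?_
            rw [div_le_iff₀ hρgap]
            nlinarith
    exact Summable.tsum_le_of_sum_le hsummable' hfinsum
  have hsplit : ∑' n' : ℤ, coordFn ε m G j x y n'
      = coordFn ε m G j x y n + ∑' n' : ℤ, if n' = n then 0 else coordFn ε m G j x y n' :=
    Summable.tsum_eq_add_tsum_ite (coordFn_summable hε0 hε1 hG j x y) n
  rw [hsplit, hkey]
  set R : ℝ := ∑' n' : ℤ, if n' = n then 0 else coordFn ε m G j x y n' with hRdef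
  have hRle : |R| ≤ (1/2) * w := by
    refine le_trans ?_ herr
    have h := norm_tsum_le_tsum_norm
      (f := fun n' : ℤ => if n' = n then 0 else coordFn ε m G j x y n')
      (by simpa [Real.norm_eq_abs] using hsummable')
    simpa [Real.norm_eq_abs] using h
  have hwn : d ^ ε / 8 ≤ w := by
    have h1 : (d/8) ^ ε ≤ ((2:ℝ) ^ (-(n:ℝ))) ^ ε :=
      Real.rpow_le_rpow (by linarith) (by linarith) hε0.le
    have h4 : ((2:ℝ) ^ (-(n:ℝ))) ^ ε = w := by
      rw [hwdef, ← Real.rpow_mul (by norm_num : (0:ℝ) ≤ 2)]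
    have h2 : (d/8) ^ ε = d ^ ε / 8 ^ ε := Real.div_rpow hd.le (by norm_num : (0:ℝ) ≤ 8) ε
    have h3 : (8:ℝ) ^ ε ≤ 8 := by
      calc (8:ℝ) ^ ε ≤ 8 ^ (1:ℝ) :=
            Real.rpow_le_rpow_of_exponent_le (by norm_num) hε1.le
        _ = 8 := Real.rpow_one 8
    have h8pos : (0:ℝ) < 8 ^ ε := Real.rpow_pos_of_pos (by norm_num) ε
    have h5 : d ^ ε / 8 ≤ d ^ ε / 8 ^ ε :=
      div_le_div_of_nonneg_left (Real.rpow_nonneg hd.le ε) h8pos h3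
    rw [← h4]
    calc d ^ ε / 8 ≤ d ^ ε / 8 ^ ε := h5
      _ = (d/8) ^ ε := h2.symm
      _ ≤ ((2:ℝ) ^ (-(n:ℝ))) ^ ε := h1
  have habs : w - (1/2) * w ≤ |w + R| := by
    have h1 : |w| - |-R| ≤ |w - -R| := abs_sub_abs_le_abs_sub w (-R)
    rw [sub_neg_eq_add, abs_neg, abs_of_pos hwpos] at h1
    linarith [hRle]
  calc d ^ ε / 16 = (1/2) * (d ^ ε / 8) := by ring
    _ ≤ (1/2) * w := by linarith
    _ = w - (1/2) * w := by ring
    _ ≤ _ := habs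

end snow


/-- Assouad's embedding theorem: the `ε`-snowflaked version of a doubling metric space
embeds bilipschitzly into some Euclidean space, quantitatively. -/
theorem stmt19 (D₁ : ℕ) (hD₁ : 1 ≤ D₁) (ε : ℝ) (hε0 : 0 < ε) (hε1 : ε < 1) :
    ∃ (N : ℕ) (L : ℝ), 1 ≤ L ∧
      ∀ (X : Type) [MetricSpace X], MetricDoubling X D₁ →
        ∃ f : X → EuclideanSpace ℝ (Fin N),
          ∀ x y : X,
            (1 / L) * dist x y ^ ε ≤ ‖f x - f y‖ ∧
              ‖f x - f y‖ ≤ L * dist x y ^ ε := by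
  classical
  obtain ⟨hρ0, hρ1⟩ := rho_mem hε0 hε1
  set ρ : ℝ := (2:ℝ) ^ (-(min ε (1-ε))) with hρdef
  have hρgap : 0 < 1 - ρ := by linarith
  obtain ⟨m₀, hm₀⟩ := exists_pow_lt_of_lt_one (show (0:ℝ) < (1 - ρ)/256 by linarith) hρ1
  set m : ℕ := m₀ + 1 with hmdef
  have hm0 : 0 < m := Nat.succ_pos m₀
  have hρm : ρ ^ m < (1 - ρ) / 256 := by
    calc ρ ^ m ≤ ρ ^ m₀ := pow_le_pow_of_le_one hρ0.le hρ1.le (Nat.le_succ m₀)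
      _ < (1 - ρ) / 256 := hm₀
  set K : ℕ := D₁ ^ 6 with hKdef
  have hK1 : 1 ≤ K := Nat.one_le_pow _ _ hD₁
  set N : ℕ := K * m with hNdef
  set C₀ : ℝ := 16 / (1 - ρ) with hC₀def
  have hC₀pos : 0 < C₀ := by positivity
  set L : ℝ := 16 + Real.sqrt N * C₀ with hLdef
  have hL16 : 16 ≤ L := by
    have : 0 ≤ Real.sqrt N * C₀ := mul_nonneg (Real.sqrt_nonneg _) hC₀pos.le
    linarith
  refine ⟨N, L, by linarith, ?_⟩
  intro X _ hD
  rcases isEmpty_or_nonempty X with hempty | hne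
  · exact ⟨fun _ => 0, fun x => (hempty.false x).elim⟩
  obtain ⟨x₀⟩ := hne
  -- nets at every scale
  set r : ℤ → ℝ := fun n => (2:ℝ) ^ (-(n:ℝ)) with hrdef
  have hrpos : ∀ n, 0 < r n := fun n => Real.rpow_pos_of_pos two_pos _
  have hrinv : ∀ n : ℤ, (r n)⁻¹ = (2:ℝ) ^ ((n:ℝ)) := by
    intro n
    show ((2:ℝ) ^ (-(n:ℝ)))⁻¹ = (2:ℝ) ^ ((n:ℝ))
    rw [Real.rpow_neg (by norm_num : (0:ℝ) ≤ 2), inv_inv]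
  have hnet : ∀ n : ℤ, ∃ A : Set X, (∀ a ∈ A, ∀ b ∈ A, a ≠ b → r n ≤ dist a b) ∧
      ∀ x : X, ∃ a ∈ A, dist x a < r n := fun n => exists_net (r n) (hrpos n)
  choose A hsep hcov using hnet
  -- neighbour counting
  have hnbrcount : ∀ (n : ℤ) (a : X), a ∈ A n →
      ({b | b ∈ A n ∧ dist a b ≤ 16 * r n}).Finite ∧
      ({b | b ∈ A n ∧ dist a b ≤ 16 * r n}).ncard ≤ K := by
    intro n a ha
    have h16 : (0:ℝ) < 16 * r n := by positivity
    have hsub : {b | b ∈ A n ∧ dist a b ≤ 16 * r n} ⊆ closedBall a (16 * r n) := by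
      intro b hb
      rw [mem_closedBall, dist_comm]
      exact hb.2
    have hsep' : ∀ b ∈ {b | b ∈ A n ∧ dist a b ≤ 16 * r n},
        ∀ b' ∈ {b | b ∈ A n ∧ dist a b ≤ 16 * r n}, b ≠ b' →
        2 * ((16 * r n) / 2 ^ 6) < dist b b' := by
      intro b hb b' hb' hne
      have := hsep n b hb.1 b' hb'.1 hne
      have h2 : 2 * ((16 * r n) / 2 ^ 6) = r n / 2 := by ring
      rw [h2]
      linarith [hrpos n]
    exact separated_card hD h16 6 hsub hsep'
  -- countability of nets
  have hcountable : ∀ n : ℤ, (A n).Countable := by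
    intro n
    have hcover : A n = ⋃ k : ℕ, (A n ∩ closedBall x₀ (k+1)) := by
      apply Set.Subset.antisymm
      · intro a ha
        obtain ⟨k, hk⟩ := exists_nat_ge (dist a x₀)
        exact Set.mem_iUnion.mpr ⟨k, ha, by rw [mem_closedBall]; linarith⟩
      · exact Set.iUnion_subset (fun k => Set.inter_subset_left)
    rw [hcover]
    apply Set.countable_iUnion
    intro k
    have hk1 : (0:ℝ) < (k:ℝ) + 1 := by positivity
    have hrn := hrpos n
    obtain ⟨j, hj⟩ := pow_unbounded_of_one_lt (2 * ((k:ℝ)+1) / r n) (by norm_num : (1:ℝ) < 2)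
    have h2j : (0:ℝ) < (2:ℝ)^j := by positivity
    have hmul : 2 * ((k:ℝ)+1) < 2^j * r n := by
      have := (div_lt_iff₀ hrn).mp hj
      linarith
    have hsep' : ∀ b ∈ A n ∩ closedBall x₀ ((k:ℝ)+1), ∀ b' ∈ A n ∩ closedBall x₀ ((k:ℝ)+1),
        b ≠ b' → 2 * (((k:ℝ)+1) / 2 ^ j) < dist b b' := by
      intro b hb b' hb' hne
      have h1 := hsep n b hb.1 b' hb'.1 hne
      have hlt : 2 * (((k:ℝ)+1) / 2^j) < r n := by
        rw [show 2 * (((k:ℝ)+1) / 2^j) = (2 * ((k:ℝ)+1)) / 2^j by ring]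
        rw [div_lt_iff₀ h2j]
        linarith [mul_comm ((2:ℝ)^j) (r n)]
      linarith
    exact ((separated_card hD hk1 j Set.inter_subset_right hsep').1).countable
  -- greedy colourings
  have hι : ∀ n : ℤ, ∃ ι : X → ℕ, Set.InjOn ι (A n) := by
    intro n
    obtain ⟨ι₀, hι₀⟩ := Set.countable_iff_exists_injective.mp (hcountable n)
    refine ⟨fun x => if h : x ∈ A n then ι₀ ⟨x, h⟩ else 0, ?_⟩
    intro a ha b hb hab
    simp only [dif_pos ha, dif_pos hb] at hab
    exact Subtype.mk_eq_mk.mp (hι₀ hab)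
  choose ι hιinj using hι
  set nb : ℤ → X → X → Prop :=
    fun n a b => a ∈ A n ∧ b ∈ A n ∧ a ≠ b ∧ dist a b ≤ 16 * r n with hnbdef
  have hnbfin : ∀ n a, {b | nb n a b}.Finite := by
    intro n a
    by_cases ha : a ∈ A n
    · exact ((hnbrcount n a ha).1).subset (fun b hb => ⟨hb.2.1, hb.2.2.2⟩)
    · convert Set.finite_empty
      ext b
      simp only [Set.mem_setOf_eq, Set.mem_empty_iff_false, iff_false]
      exact fun h => ha h.1
  have hnbK : ∀ n a, {b | nb n a b}.ncard < K := by
    intro n a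
    by_cases ha : a ∈ A n
    · have hsub : {b | nb n a b} ⊆ {b | b ∈ A n ∧ dist a b ≤ 16 * r n} \ {a} := by
        intro b hb
        exact ⟨⟨hb.2.1, hb.2.2.2⟩, fun h => hb.2.2.1 (h.symm)⟩
      have hamem : a ∈ {b | b ∈ A n ∧ dist a b ≤ 16 * r n} := by
        refine ⟨ha, ?_⟩
        rw [dist_self]
        positivity
      obtain ⟨hfin, hcard⟩ := hnbrcount n a ha
      have h1 : ({b | b ∈ A n ∧ dist a b ≤ 16 * r n} \ {a}).ncard + 1
          = {b | b ∈ A n ∧ dist a b ≤ 16 * r n}.ncard :=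
        Set.ncard_diff_singleton_add_one hamem hfin
      have h2 : {b | nb n a b}.ncard ≤ ({b | b ∈ A n ∧ dist a b ≤ 16 * r n} \ {a}).ncard :=
        Set.ncard_le_ncard hsub (hfin.subset Set.diff_subset)
      omega
    · have hempty' : {b | nb n a b} = ∅ := by
        ext b
        simp only [Set.mem_setOf_eq, Set.mem_empty_iff_false, iff_false]
        exact fun h => ha h.1
      rw [hempty']
      simpa using (show 0 < K from hK1)
  set col : ℤ → X → ℕ := fun n => greedyCol (nb n) (ι n) with hcoldef
  have hcolK : ∀ n a, col n a < K := fun n a => greedyCol_lt _ _ (hnbfin n) (hnbK n) a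
  have hcolne : ∀ n, ∀ a ∈ A n, ∀ b ∈ A n, a ≠ b → dist a b ≤ 16 * r n →
      col n a ≠ col n b := by
    intro n a ha b hb hab hdist
    have hιne : ι n a ≠ ι n b := fun h => hab (hιinj n ha hb h)
    rcases lt_or_gt_of_ne hιne with hlt | hgt
    · exact greedyCol_ne (nb n) (ι n) (hnbfin n) (hnbK n) b a
        ⟨hb, ha, Ne.symm hab, by rwa [dist_comm]⟩ hlt
    · exact (greedyCol_ne (nb n) (ι n) (hnbfin n) (hnbK n) a b
        ⟨ha, hb, hab, hdist⟩ hgt).symm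
  -- bump functions
  set S : ℤ → ℕ → Set X := fun n c => {a | a ∈ A n ∧ col n a = c} with hSdef
  set G : ℕ → ℤ → X → ℝ := fun c n x => snowG (S n c) (r n) x with hGdef
  have hG : ∀ (c : ℕ) (n : ℤ) (z z' : X),
      |G c n z - G c n z'| ≤ min 1 ((2:ℝ) ^ ((n:ℝ)) * dist z z') := by
    intro c n z z'
    have := snowG_lip (S := S n c) (hrpos n) z z'
    rwa [hrinv n] at this
  -- the embedding
  set f : X → EuclideanSpace ℝ (Fin N) :=
    fun x => WithLp.toLp 2 (fun i : Fin N =>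
      ∑' n : ℤ, coordFn ε m (G (i.val / m)) (i.val % m) x x₀ n) with hfdef
  refine ⟨f, ?_⟩
  intro x y
  rcases eq_or_ne x y with rfl | hxy
  · simp [dist_self, Real.zero_rpow hε0.ne', sub_self, norm_zero]
  have hd : 0 < dist x y := dist_pos.mpr hxy
  have hcoordeq : ∀ i : Fin N,
      (f x - f y) i = ∑' n : ℤ, coordFn ε m (G (i.val / m)) (i.val % m) x y n := by
    intro i
    have h1 : (f x - f y) i = f x i - f y i := PiLp.sub_apply (fun _ : Fin N => ℝ) (f x) (f y) i
    rw [h1]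
    exact coordFn_tsum_sub hε0 hε1 (hG (i.val / m)) (i.val % m) x y x₀
  -- upper bound on every coordinate
  have hcoord : ∀ i : Fin N, |(f x - f y) i| ≤ C₀ * dist x y ^ ε := by
    intro i
    rw [hcoordeq i]
    calc |∑' n : ℤ, coordFn ε m (G (i.val / m)) (i.val % m) x y n|
        ≤ 16 * dist x y ^ ε / (1 - ρ) :=
          coordFn_tsum_abs_le hε0 hε1 (hG (i.val / m)) (i.val % m) hd
      _ = C₀ * dist x y ^ ε := by rw [hC₀def]; ring
  -- norm upper bound
  have hupper : ‖f x - f y‖ ≤ L * dist x y ^ ε := by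
    have hnn : (0:ℝ) ≤ C₀ * dist x y ^ ε := by positivity
    rw [EuclideanSpace.norm_eq]
    have hsum : ∑ i : Fin N, ‖(f x - f y) i‖ ^ 2 ≤ (N:ℝ) * (C₀ * dist x y ^ ε)^2 := by
      calc ∑ i : Fin N, ‖(f x - f y) i‖ ^ 2 ≤ ∑ _i : Fin N, (C₀ * dist x y ^ ε)^2 := by
            apply Finset.sum_le_sum
            intro i _
            rw [Real.norm_eq_abs]
            have := hcoord i
            nlinarith [abs_nonneg ((f x - f y) i)]
        _ = (N:ℝ) * (C₀ * dist x y ^ ε)^2 := by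
            rw [Finset.sum_const, Finset.card_univ, Fintype.card_fin, nsmul_eq_mul]
    calc Real.sqrt (∑ i : Fin N, ‖(f x - f y) i‖ ^ 2)
        ≤ Real.sqrt ((N:ℝ) * (C₀ * dist x y ^ ε)^2) := Real.sqrt_le_sqrt hsum
      _ = Real.sqrt N * (C₀ * dist x y ^ ε) := by
          rw [Real.sqrt_mul (Nat.cast_nonneg N), Real.sqrt_sq hnn]
      _ ≤ L * dist x y ^ ε := by
          rw [hLdef]
          have h1 : (0:ℝ) ≤ dist x y ^ ε := Real.rpow_nonneg hd.le ε
          nlinarith [Real.sqrt_nonneg (N:ℝ), hC₀pos]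
  -- lower bound
  obtain ⟨n, hn1, hn2⟩ := exists_scale (show (0:ℝ) < dist x y / 4 by linarith)
  have h4rn : 4 * (2:ℝ) ^ (-(n:ℝ)) ≤ dist x y := by linarith
  have h8rn : dist x y < 8 * (2:ℝ) ^ (-(n:ℝ)) := by linarith
  have hrneq : r n = (2:ℝ) ^ (-(n:ℝ)) := rfl
  obtain ⟨a, haA, hdxa⟩ := hcov n x
  set c : ℕ := col n a with hcdef
  have hcK : c < K := hcolK n a
  set j : ℕ := (n % (m:ℤ)).toNat with hjdef
  have hjm : j < m := by
    have h1 : n % (m:ℤ) < (m:ℤ) := Int.emod_lt_of_pos n (by exact_mod_cast hm0)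
    have h2 : 0 ≤ n % (m:ℤ) := Int.emod_nonneg n (by exact_mod_cast hm0.ne')
    omega
  set i : Fin N := ⟨c * m + j, by
    calc c * m + j < c * m + m := by omega
      _ = (c + 1) * m := by ring
      _ ≤ K * m := Nat.mul_le_mul_right m (by omega)⟩ with hidef
  have hidiv : i.val / m = c := by
    show (c * m + j) / m = c
    rw [Nat.add_comm, Nat.add_mul_div_right _ _ hm0, Nat.div_eq_of_lt hjm]
    omega
  have himod : i.val % m = j := by
    show (c * m + j) % m = j
    rw [Nat.add_comm, Nat.add_mul_mod_self_right, Nat.mod_eq_of_lt hjm]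
  have haS : a ∈ S n c := ⟨haA, rfl⟩
  have hgx : G c n x = 1 := snowG_one (hrpos n) haS hdxa
  have hgy : G c n y = 0 := by
    apply snowG_zero (hrpos n) ⟨a, haS⟩
    intro a' ha'S
    rcases eq_or_ne a' a with rfl | hne
    · have htri : dist x y ≤ dist x a' + dist a' y := dist_triangle x a' y
      rw [hrneq, dist_comm]
      have := hrpos n
      rw [hrneq] at this hdxa
      linarith
    · have hfar : ¬ (dist a a' ≤ 16 * r n) := by
        intro hle
        exact hcolne n a haA a' ha'S.1 (Ne.symm hne) hle (by rw [← hcdef, ha'S.2])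
      push_neg at hfar
      have htri1 : dist a a' ≤ dist a x + dist x y + dist y a' := by
        calc dist a a' ≤ dist a y + dist y a' := dist_triangle a y a'
          _ ≤ (dist a x + dist x y) + dist y a' := by
              linarith [dist_triangle a x y]
      have hax : dist a x < r n := by rw [dist_comm]; exact hdxa
      rw [hrneq]
      have := hrpos n
      rw [hrneq] at this hfar hax
      linarith
  have hlowcoord : dist x y ^ ε / 16 ≤ |(f x - f y) i| := by
    rw [hcoordeq i, hidiv, himod]
    exact coordFn_tsum_lower hε0 hε1 hm0 hρm (hG c) n h4rn h8rn hgx hgy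
  have hlower : (1/L) * dist x y ^ ε ≤ ‖f x - f y‖ := by
    have hnormge : |(f x - f y) i| ≤ ‖f x - f y‖ := by
      rw [EuclideanSpace.norm_eq]
      have h1 : |(f x - f y) i| = Real.sqrt (‖(f x - f y) i‖ ^ 2) := by
        rw [Real.norm_eq_abs, Real.sqrt_sq_eq_abs, abs_abs]
      rw [h1]
      apply Real.sqrt_le_sqrt
      apply Finset.single_le_sum (f := fun i => ‖(f x - f y) i‖ ^ 2) ?_ (Finset.mem_univ i)
      intro i' _
      positivity
    have h16 : (1/L) * dist x y ^ ε ≤ dist x y ^ ε / 16 := by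
      have hLpos : (0:ℝ) < L := by linarith
      have hinv : 1/L ≤ 1/16 := one_div_le_one_div_of_le (by norm_num) hL16
      have hdε : (0:ℝ) ≤ dist x y ^ ε := Real.rpow_nonneg hd.le ε
      calc (1/L) * dist x y ^ ε ≤ (1/16) * dist x y ^ ε :=
            mul_le_mul_of_nonneg_right hinv hdε
        _ = dist x y ^ ε / 16 := by ring
    linarith [hlowcoord, hnormge, h16]
  exact ⟨hlower, hupper⟩
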